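/- For the 1×1 example L = ∂_t + ∂_1 + ∂_2 with absorption σ = 1 in x_1, the split symbol L̃(τ,ξ,-ξ) = [[τ+ξ+1, ξ],[-ξ, τ-ξ]] has determinant τ² + τ - ξ, and for ξ → -∞ the roots τ = (-1 ± √(1+4ξ))/2 have imaginary parts unbounded. In particular, for every M ≥ 0 there exists ξ ∈ ℝ and τ ∈ ℂ with det L̃(τ,ξ,-ξ) = 0 and |Im τ| > M. -/
import Mathlib


open Matrix

/-- For `L = ∂_t + ∂_1 + ∂_2` with absorption `σ = 1` in `x₁`, the split symbol
`L̃(τ,ξ,-ξ) = [[τ+ξ+1, ξ],[-ξ, τ-ξ]]` has determinant `τ² + τ - ξ`, and the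
imaginary parts of its roots are unbounded over real `ξ`: for every `M ≥ 0`
there are `ξ ∈ ℝ`, `τ ∈ ℂ` with `det L̃(τ,ξ,-ξ) = 0` and `|Im τ| > M`. -/
theorem berenger_not_weakly_hyperbolic_example :
    (∀ τ ξ : ℂ, (!![τ + ξ + 1, ξ; -ξ, τ - ξ]).det = τ ^ 2 + τ - ξ) ∧
    ∀ M : ℝ, 0 ≤ M → ∃ (ξ : ℝ) (τ : ℂ),
      (!![τ + (ξ : ℂ) + 1, (ξ : ℂ); -(ξ : ℂ), τ - (ξ : ℂ)]).det = 0 ∧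
      M < |τ.im| := by
  have hdet : ∀ τ ξ : ℂ, (!![τ + ξ + 1, ξ; -ξ, τ - ξ]).det = τ ^ 2 + τ - ξ := by
    intro τ ξ
    simp [Matrix.det_fin_two_of]
    ring
  refine ⟨hdet, fun M hM => ?_⟩
  refine ⟨-((M + 1) ^ 2 + 1 / 4), ⟨-(1/2), M + 1⟩, ?_, ?_⟩
  · rw [hdet]
    apply Complex.ext <;>
      simp [Complex.ext_iff, pow_two, Complex.mul_re, Complex.mul_im] <;> ring
  · simp
    rw [abs_of_nonneg (by linarith)]
    linarith
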